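/- Assume the p=3 parasupersymmetry algebra, with Q₁ = (Q† + Q)/(2√3) and Q₂ = (Q† − Q)/(2√3·i). Let Ψ ≠ 0 satisfy Q₁Ψ = q₁Ψ, HΨ = EΨ (q₁, E ∈ ℝ) and Q₂²Ψ = q₁²Ψ. Then (Q₁² + Q₂²)(Q₁Q₂ + Q₂Q₁)Ψ = (E − 2q₁²)(Q₁Q₂ + Q₂Q₁)Ψ; consequently, if (Q₁Q₂ + Q₂Q₁)Ψ ≠ 0, then E ≥ 2q₁² ≥ 0. -/

import Mathlib

open ContinuousLinearMap

/-- The hermitian parasupercharge `Q₁ = (Q† + Q)/(2√3)`. -/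
noncomputable def hermQ1 {𝓗 : Type*} [NormedAddCommGroup 𝓗] [InnerProductSpace ℂ 𝓗]
    [CompleteSpace 𝓗] (Q : 𝓗 →L[ℂ] 𝓗) : 𝓗 →L[ℂ] 𝓗 :=
  ((2 * Real.sqrt 3 : ℝ) : ℂ)⁻¹ • (adjoint Q + Q)

/-- The hermitian parasupercharge `Q₂ = (Q† − Q)/(2√3·i)`. -/
noncomputable def hermQ2 {𝓗 : Type*} [NormedAddCommGroup 𝓗] [InnerProductSpace ℂ 𝓗]
    [CompleteSpace 𝓗] (Q : 𝓗 →L[ℂ] 𝓗) : 𝓗 →L[ℂ] 𝓗 :=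
  (((2 * Real.sqrt 3 : ℝ) : ℂ) * Complex.I)⁻¹ • (adjoint Q - Q)

set_option maxHeartbeats 1000000

/-- Assuming the p=3 parasupersymmetry algebra, if `Ψ ≠ 0` satisfies
`Q₁Ψ = q₁Ψ`, `HΨ = EΨ` and `Q₂²Ψ = q₁²Ψ`, then
`(Q₁² + Q₂²)(Q₁Q₂ + Q₂Q₁)Ψ = (E − 2q₁²)(Q₁Q₂ + Q₂Q₁)Ψ`; consequently, if
`(Q₁Q₂ + Q₂Q₁)Ψ ≠ 0`, then `E ≥ 2q₁² ≥ 0`. -/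
theorem stmt12 {𝓗 : Type*} [NormedAddCommGroup 𝓗] [InnerProductSpace ℂ 𝓗] [CompleteSpace 𝓗]
    (Q H : 𝓗 →L[ℂ] 𝓗) (hH : IsSelfAdjoint H)
    (hQH : Q * H = H * Q) (hQdH : adjoint Q * H = H * adjoint Q)
    (hii : Q ^ 3 * adjoint Q + Q ^ 2 * adjoint Q * Q + Q * adjoint Q * Q ^ 2
      + adjoint Q * Q ^ 3 = 6 * (Q ^ 2 * H))
    (hiii : Q * (adjoint Q) ^ 2 * Q = adjoint Q * Q ^ 2 * adjoint Q)
    (hiv : (adjoint Q) ^ 3 * Q + (adjoint Q) ^ 2 * Q * adjoint Q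
      + adjoint Q * Q * (adjoint Q) ^ 2 + Q * (adjoint Q) ^ 3 = 6 * ((adjoint Q) ^ 2 * H))
    (hQ4 : Q ^ 4 = 0) (hQd4 : (adjoint Q) ^ 4 = 0)
    (Ψ : 𝓗) (hΨ : Ψ ≠ 0) (q₁ E : ℝ)
    (hq₁ : hermQ1 Q Ψ = (q₁ : ℂ) • Ψ)
    (hE : H Ψ = (E : ℂ) • Ψ)
    (hker : ((hermQ2 Q) ^ 2) Ψ = ((q₁ : ℂ) ^ 2) • Ψ) :
    (((hermQ1 Q) ^ 2 + (hermQ2 Q) ^ 2)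
        ((hermQ1 Q * hermQ2 Q + hermQ2 Q * hermQ1 Q) Ψ)
      = ((E - 2 * q₁ ^ 2 : ℝ) : ℂ) • ((hermQ1 Q * hermQ2 Q + hermQ2 Q * hermQ1 Q) Ψ)) ∧
    ((hermQ1 Q * hermQ2 Q + hermQ2 Q * hermQ1 Q) Ψ ≠ 0 →
      2 * q₁ ^ 2 ≤ E ∧ 0 ≤ 2 * q₁ ^ 2) := by
  set P : 𝓗 →L[ℂ] 𝓗 := adjoint Q with hPdef
  set a : ℂ := ((2 * Real.sqrt 3 : ℝ) : ℂ) with hadef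
  have ha2 : a ^ 2 = 12 := by
    rw [hadef]
    norm_cast
    rw [mul_pow, Real.sq_sqrt (by norm_num : (0:ℝ) ≤ 3)]
    norm_num
  set c : ℂ := a⁻¹ with hcdef
  set d : ℂ := (a * Complex.I)⁻¹ with hddef
  have hQ1 : hermQ1 Q = c • (P + Q) := rfl
  have hQ2 : hermQ2 Q = d • (P - Q) := rfl
  have hc2 : c ^ 2 = (12:ℂ)⁻¹ := by rw [hcdef, ← ha2, inv_pow]
  have hd2 : d ^ 2 = -(12:ℂ)⁻¹ := by
    rw [hddef, inv_pow, mul_pow, ha2, Complex.I_sq]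
    rw [mul_neg_one, inv_neg]
  have hcd : c * d * 2 = -Complex.I / 6 := by
    rw [hcdef, hddef, ← mul_inv, ← mul_assoc, ← sq, ha2]
    rw [mul_inv, Complex.inv_I]; ring_nf
  -- key algebraic identity from (ii) and (iv)
  have key : (P * Q + Q * P) * (P ^ 2 - Q ^ 2) + (P ^ 2 - Q ^ 2) * (P * Q + Q * P)
      = (6:ℂ) • (P ^ 2 * H) - (6:ℂ) • (Q ^ 2 * H) := by
    have h6 : ∀ T : 𝓗 →L[ℂ] 𝓗, (6 : 𝓗 →L[ℂ] 𝓗) * T = (6:ℂ) • T := by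
      intro T; ext x; simp [← Nat.cast_smul_eq_nsmul ℂ]
    calc (P * Q + Q * P) * (P ^ 2 - Q ^ 2) + (P ^ 2 - Q ^ 2) * (P * Q + Q * P)
        = (P ^ 3 * Q + P ^ 2 * Q * P + P * Q * P ^ 2 + Q * P ^ 3)
          - (Q ^ 3 * P + Q ^ 2 * P * Q + Q * P * Q ^ 2 + P * Q ^ 3) := by noncomm_ring
      _ = 6 * (P ^ 2 * H) - 6 * (Q ^ 2 * H) := by rw [hiv, hii]
      _ = (6:ℂ) • (P ^ 2 * H) - (6:ℂ) • (Q ^ 2 * H) := by rw [h6, h6]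
  -- K and M in terms of P, Q
  have hK : hermQ1 Q ^ 2 + hermQ2 Q ^ 2 = (6:ℂ)⁻¹ • (P * Q + Q * P) := by
    rw [hQ1, hQ2, smul_pow, smul_pow, hc2, hd2, neg_smul, ← sub_eq_add_neg, ← smul_sub]
    have h : (P + Q) ^ 2 - (P - Q) ^ 2 = (P * Q + Q * P) + (P * Q + Q * P) := by noncomm_ring
    rw [h, ← two_smul ℂ, smul_smul]
    norm_num
  have hM : hermQ1 Q * hermQ2 Q + hermQ2 Q * hermQ1 Q
      = (-Complex.I / 6) • (P ^ 2 - Q ^ 2) := by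
    rw [hQ1, hQ2, smul_mul_smul_comm, smul_mul_smul_comm, mul_comm d c, ← smul_add]
    have h : (P + Q) * (P - Q) + (P - Q) * (P + Q) = (P ^ 2 - Q ^ 2) + (P ^ 2 - Q ^ 2) := by
      noncomm_ring
    rw [h, ← two_smul ℂ, smul_smul, ← hcd]
  -- the operator identity K M + M K = M H
  have heq : (hermQ1 Q ^ 2 + hermQ2 Q ^ 2) * (hermQ1 Q * hermQ2 Q + hermQ2 Q * hermQ1 Q)
      + (hermQ1 Q * hermQ2 Q + hermQ2 Q * hermQ1 Q) * (hermQ1 Q ^ 2 + hermQ2 Q ^ 2)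
      = (hermQ1 Q * hermQ2 Q + hermQ2 Q * hermQ1 Q) * H := by
    rw [hK, hM, smul_mul_smul_comm, smul_mul_smul_comm,
      mul_comm ((-Complex.I / 6)) ((6:ℂ)⁻¹), ← smul_add, key, smul_sub, smul_smul, smul_smul,
      smul_mul_assoc, sub_mul]
    rw [smul_sub]
    congr 1 <;> congr 1 <;> ring
  -- K Ψ = 2 q₁² Ψ
  have hKΨ : (hermQ1 Q ^ 2 + hermQ2 Q ^ 2) Ψ = ((2 * q₁ ^ 2 : ℝ) : ℂ) • Ψ := by
    have h1 : (hermQ1 Q ^ 2) Ψ = ((q₁:ℂ) ^ 2) • Ψ := by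
      rw [pow_two, ContinuousLinearMap.mul_apply, hq₁, map_smul, hq₁, smul_smul, ← pow_two]
    rw [add_apply, h1, hker, ← add_smul]
    congr 1
    push_cast; ring
  set M : 𝓗 →L[ℂ] 𝓗 := hermQ1 Q * hermQ2 Q + hermQ2 Q * hermQ1 Q with hMdef
  set K : 𝓗 →L[ℂ] 𝓗 := hermQ1 Q ^ 2 + hermQ2 Q ^ 2 with hKdef
  have part1 : K (M Ψ) = ((E - 2 * q₁ ^ 2 : ℝ) : ℂ) • (M Ψ) := by
    have h := congrArg (fun T : 𝓗 →L[ℂ] 𝓗 => T Ψ) heq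
    simp only [ContinuousLinearMap.add_apply, ContinuousLinearMap.mul_apply] at h
    rw [hE, hKΨ, map_smul, map_smul] at h
    have h2 : K (M Ψ) = (E : ℂ) • M Ψ - ((2 * q₁ ^ 2 : ℝ) : ℂ) • M Ψ := by
      rw [← h]; abel
    rw [h2, ← sub_smul]
    push_cast
    ring_nf
  refine ⟨part1, fun hv => ?_⟩
  refine ⟨?_, by positivity⟩
  -- self-adjointness of Q₁ and Q₂
  have hstarP : star P = Q := by rw [hPdef, star_eq_adjoint, adjoint_adjoint]
  have hstarQ : star Q = P := by rw [star_eq_adjoint, hPdef]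
  have hstarc : star c = c := by
    rw [hcdef, hadef]
    simp [star_inv₀, Complex.star_def, Complex.conj_ofReal]
  have hstard : star d = -d := by
    rw [hddef, hadef]
    rw [star_inv₀, star_mul', Complex.star_def, Complex.conj_I, Complex.conj_ofReal]
    rw [mul_neg, inv_neg]
  have hsa1 : adjoint (hermQ1 Q) = hermQ1 Q := by
    rw [hQ1, ← star_eq_adjoint, star_smul, star_add, hstarP, hstarQ, hstarc, add_comm]
  have hsa2 : adjoint (hermQ2 Q) = hermQ2 Q := by
    rw [hQ2, ← star_eq_adjoint, star_smul, star_sub, hstarP, hstarQ, hstard,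
      neg_smul, ← smul_neg, neg_sub]
  set v : 𝓗 := M Ψ with hvdef
  have hip : RCLike.re (inner (𝕜 := ℂ) v (K v)) = ‖hermQ1 Q v‖ ^ 2 + ‖hermQ2 Q v‖ ^ 2 := by
    have e1 : K v = hermQ1 Q (hermQ1 Q v) + hermQ2 Q (hermQ2 Q v) := by
      rw [hKdef]
      simp [pow_two, ContinuousLinearMap.add_apply, ContinuousLinearMap.mul_apply]
    rw [e1, inner_add_right, map_add]
    congr 1
    · rw [← hsa1, adjoint_inner_right, hsa1, inner_self_eq_norm_sq]
    · rw [← hsa2, adjoint_inner_right, hsa2, inner_self_eq_norm_sq]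
  have hip2 : RCLike.re (inner (𝕜 := ℂ) v (K v)) = (E - 2 * q₁ ^ 2) * ‖v‖ ^ 2 := by
    rw [part1, inner_smul_right, inner_self_eq_norm_sq_to_K]
    norm_cast
    simp [RCLike.mul_re, ← Complex.ofReal_pow]
  have hnonneg : 0 ≤ (E - 2 * q₁ ^ 2) * ‖v‖ ^ 2 := by
    rw [← hip2, hip]; positivity
  have hvpos : 0 < ‖v‖ ^ 2 := pow_pos (norm_pos_iff.mpr hv) 2
  rw [mul_comm] at hnonneg
  have h4 : 0 ≤ E - 2 * q₁ ^ 2 := nonneg_of_mul_nonneg_right hnonneg hvpos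
  linarith
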